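/- Let p^{S^{-1}}(t,x,y) = ∫_{(0,∞)} c(d) t^β s^{-β} / ((t^β s^{-β})² + |x-y|²)^{(d+1)/2} μ_β(ds) be the Cauchy kernel on ℝ^d time-changed by an inverse β-stable subordinator, where c(d) = π^{-(d+1)/2} Γ((d+1)/2). Then, as |x-y|^{-1/β} t → 0, p^{S^{-1}}(t,x,y) ∼ (Γ((d+1)/2) / (π^{(d+1)/2} β Γ(β))) |x-y|^{-d-1} t^β; that is, for every ε > 0 there exists δ > 0 such that whenever t > 0, x ≠ y ∈ ℝ^d and |x-y|^{-1/β} t ≤ δ, the ratio of the two sides lies within ε of 1. -/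

import Mathlib

open MeasureTheory Set Real Filter

lemma momentA
    (β : ℝ) (hβ0 : 0 < β) (hβ1 : β < 1)
    (μ : Measure ℝ) (hprob : IsProbabilityMeasure μ)
    (hlap : ∀ r : ℝ, 0 < r →
      ∫ s in Set.Ioi (0:ℝ), Real.exp (-(r * s)) ∂μ = Real.exp (-(r ^ β))) :
    IntegrableOn (fun s : ℝ => s ^ (-β)) (Ioi 0) μ ∧
    ∫ s in Set.Ioi (0:ℝ), s ^ (-β) ∂μ = 1 / (β * Real.Gamma β) := by
  have hΓ : 0 < Real.Gamma β := Real.Gamma_pos_of_pos hβ0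
  have hmeas_f : Measurable fun p : ℝ × ℝ =>
      ENNReal.ofReal (p.2 ^ (β - 1) * Real.exp (-(p.2 * p.1))) :=
    by fun_prop
  -- key lintegral computation
  have key : ∫⁻ s in Ioi (0:ℝ), ENNReal.ofReal (Real.Gamma β * s ^ (-β)) ∂μ
      = ENNReal.ofReal (1 / β) := by
    calc ∫⁻ s in Ioi (0:ℝ), ENNReal.ofReal (Real.Gamma β * s ^ (-β)) ∂μ
        = ∫⁻ s in Ioi (0:ℝ),
            ∫⁻ r in Ioi (0:ℝ), ENNReal.ofReal (r ^ (β - 1) * Real.exp (-(r * s))) ∂volume ∂μ := by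
          refine setLIntegral_congr_fun measurableSet_Ioi (fun s hs => ?_)
          have hs0 : (0:ℝ) < s := hs
          have hint : IntegrableOn (fun r : ℝ => r ^ (β - 1) * Real.exp (-(s * r))) (Ioi 0) := by
            have := integrableOn_rpow_mul_exp_neg_mul_rpow
              (show (-1:ℝ) < β - 1 by linarith) (show (0:ℝ) < 1 by norm_num) hs0
            refine this.congr_fun (fun r hr => ?_) measurableSet_Ioi
            simp [Real.rpow_one, neg_mul]
          have hval : ∫ r in Ioi (0:ℝ), r ^ (β - 1) * Real.exp (-(s * r))
              = (1 / s) ^ β * Real.Gamma β :=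
            Real.integral_rpow_mul_exp_neg_mul_Ioi hβ0 hs0
          have hnn : 0 ≤ᵐ[volume.restrict (Ioi (0:ℝ))]
              fun r : ℝ => r ^ (β - 1) * Real.exp (-(s * r)) := by
            filter_upwards [ae_restrict_mem measurableSet_Ioi] with r hr
            exact mul_nonneg (Real.rpow_nonneg (le_of_lt hr) _) (Real.exp_nonneg _)
          have h1 : ENNReal.ofReal ((1 / s) ^ β * Real.Gamma β)
              = ∫⁻ r in Ioi (0:ℝ), ENNReal.ofReal (r ^ (β - 1) * Real.exp (-(s * r))) ∂volume := by
            rw [← hval]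
            exact ofReal_integral_eq_lintegral_ofReal hint hnn
          have h2 : (1 / s) ^ β * Real.Gamma β = Real.Gamma β * s ^ (-β) := by
            rw [one_div, Real.inv_rpow hs0.le, ← Real.rpow_neg hs0.le]
            ring
          rw [← h2, h1]
          refine setLIntegral_congr_fun measurableSet_Ioi (fun r hr => ?_)
          rw [mul_comm s r]
      _ = ∫⁻ r in Ioi (0:ℝ),
            ∫⁻ s in Ioi (0:ℝ), ENNReal.ofReal (r ^ (β - 1) * Real.exp (-(r * s))) ∂μ ∂volume := by
          exact lintegral_lintegral_swap hmeas_f.aemeasurable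
      _ = ∫⁻ r in Ioi (0:ℝ), ENNReal.ofReal (r ^ (β - 1) * Real.exp (-(r ^ β))) ∂volume := by
          refine setLIntegral_congr_fun measurableSet_Ioi (fun r hr => ?_)
          have hr0 : (0:ℝ) < r := hr
          have hmono : ∀ s : ℝ, ENNReal.ofReal (r ^ (β - 1) * Real.exp (-(r * s)))
              = ENNReal.ofReal (r ^ (β - 1)) * ENNReal.ofReal (Real.exp (-(r * s))) := fun s =>
            ENNReal.ofReal_mul (Real.rpow_nonneg hr0.le _)
          simp_rw [hmono]
          rw [lintegral_const_mul' _ _ ENNReal.ofReal_ne_top]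
          have hintg : Integrable (fun s : ℝ => Real.exp (-(r * s))) (μ.restrict (Ioi 0)) := by
            refine Integrable.mono' (integrable_const (1:ℝ))
              (((measurable_id.const_mul r).neg.exp).aestronglyMeasurable) ?_
            filter_upwards [ae_restrict_mem measurableSet_Ioi] with s hs
            rw [Real.norm_eq_abs, abs_of_nonneg (Real.exp_nonneg _)]
            exact Real.exp_le_one_iff.mpr (by nlinarith [mem_Ioi.mp hs])
          have h3 : ∫⁻ s in Ioi (0:ℝ), ENNReal.ofReal (Real.exp (-(r * s))) ∂μ
              = ENNReal.ofReal (Real.exp (-(r ^ β))) := by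
            rw [← hlap r hr0]
            exact (ofReal_integral_eq_lintegral_ofReal hintg
              (ae_of_all _ fun s => Real.exp_nonneg _)).symm
          rw [h3, ← ENNReal.ofReal_mul (Real.rpow_nonneg hr0.le _)]
      _ = ENNReal.ofReal (1 / β) := by
          have hint2 : IntegrableOn (fun r : ℝ => r ^ (β - 1) * Real.exp (-(r ^ β))) (Ioi 0) := by
            have h := (integrableOn_Ioi_comp_rpow_iff' (fun u : ℝ => Real.exp (-u)) hβ0.ne').mpr ?_
            · refine h.congr_fun (fun r hr => ?_) measurableSet_Ioi
              simp [smul_eq_mul]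
            · have := exp_neg_integrableOn_Ioi (0:ℝ) one_pos
              refine this.congr_fun (fun r hr => ?_) measurableSet_Ioi
              simp
          have hnn : 0 ≤ᵐ[volume.restrict (Ioi (0:ℝ))]
              fun r : ℝ => r ^ (β - 1) * Real.exp (-(r ^ β)) := by
            filter_upwards [ae_restrict_mem measurableSet_Ioi] with r hr
            exact mul_nonneg (Real.rpow_nonneg (le_of_lt hr) _) (Real.exp_nonneg _)
          rw [← ofReal_integral_eq_lintegral_ofReal hint2 hnn]
          have hval2 : ∫ r in Ioi (0:ℝ), r ^ (β - 1) * Real.exp (-(r ^ β)) = 1 / β := by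
            have := integral_rpow_mul_exp_neg_rpow hβ0 (show (-1:ℝ) < β - 1 by linarith)
            simpa [sub_add_cancel, div_self hβ0.ne', Real.Gamma_one] using this
          rw [hval2]
  -- deduce the lintegral of s^(-β)
  have hΓne : ENNReal.ofReal (Real.Gamma β) ≠ 0 := by
    simp [ENNReal.ofReal_eq_zero, not_le, hΓ]
  have key2 : ∫⁻ s in Ioi (0:ℝ), ENNReal.ofReal (s ^ (-β)) ∂μ
      = ENNReal.ofReal (1 / (β * Real.Gamma β)) := by
    have h5 : ENNReal.ofReal (Real.Gamma β)
        * ∫⁻ s in Ioi (0:ℝ), ENNReal.ofReal (s ^ (-β)) ∂μ = ENNReal.ofReal (1 / β) := by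
      rw [← lintegral_const_mul' _ _ ENNReal.ofReal_ne_top]
      simp_rw [← ENNReal.ofReal_mul hΓ.le]
      exact key
    have h6 : ∫⁻ s in Ioi (0:ℝ), ENNReal.ofReal (s ^ (-β)) ∂μ
        = ENNReal.ofReal (1 / β) / ENNReal.ofReal (Real.Gamma β) := by
      rw [← h5, mul_comm, mul_div_assoc, ENNReal.div_self hΓne ENNReal.ofReal_ne_top, mul_one]
    rw [h6, ← ENNReal.ofReal_div_of_pos hΓ]
    congr 1
    field_simp
  have hnnae : 0 ≤ᵐ[μ.restrict (Ioi 0)] fun s : ℝ => s ^ (-β) := by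
    filter_upwards [ae_restrict_mem measurableSet_Ioi] with s hs
    exact Real.rpow_nonneg (le_of_lt hs) _
  have hmeas : AEStronglyMeasurable (fun s : ℝ => s ^ (-β)) (μ.restrict (Ioi 0)) :=
    Measurable.aestronglyMeasurable (by fun_prop)
  have hint : IntegrableOn (fun s : ℝ => s ^ (-β)) (Ioi 0) μ := by
    refine ⟨hmeas, ?_⟩
    rw [hasFiniteIntegral_iff_ofReal hnnae, key2]
    exact ENNReal.ofReal_lt_top
  refine ⟨hint, ?_⟩
  rw [integral_eq_lintegral_of_nonneg_ae hnnae hmeas, key2, ENNReal.toReal_ofReal]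
  positivity

theorem stmt_12
    (β : ℝ) (hβ0 : 0 < β) (hβ1 : β < 1)
    (μ : Measure ℝ) (hprob : IsProbabilityMeasure μ)
    (hsupp : μ (Set.Iic 0) = 0)
    (hlap : ∀ r : ℝ, 0 < r →
      ∫ s in Set.Ioi (0:ℝ), Real.exp (-(r * s)) ∂μ = Real.exp (-(r ^ β)))
    (d : ℕ) (hd : 1 ≤ d)
    (pSinv : ℝ → EuclideanSpace ℝ (Fin d) → EuclideanSpace ℝ (Fin d) → ℝ)
    (hpSinv : ∀ t : ℝ, 0 < t → ∀ x y : EuclideanSpace ℝ (Fin d),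
      pSinv t x y = ∫ s in Set.Ioi (0:ℝ),
        Real.pi ^ (-(((d:ℝ) + 1)/2)) * Real.Gamma (((d:ℝ) + 1)/2) *
          (t ^ β * s ^ (-β)) /
            ((t ^ β * s ^ (-β)) ^ 2 + dist x y ^ 2) ^ (((d:ℝ) + 1)/2) ∂μ) :
    ∀ ε : ℝ, 0 < ε → ∃ δ : ℝ, 0 < δ ∧ ∀ t : ℝ, 0 < t →
      ∀ x y : EuclideanSpace ℝ (Fin d), x ≠ y →
      dist x y ^ (-(1/β)) * t ≤ δ →
      |pSinv t x y /
        (Real.Gamma (((d:ℝ) + 1)/2) /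
            (Real.pi ^ (((d:ℝ) + 1)/2) * β * Real.Gamma β) *
          (dist x y ^ (-((d:ℝ) + 1)) * t ^ β)) - 1| ≤ ε := by
  obtain ⟨hmom, hmomval⟩ := momentA β hβ0 hβ1 μ hprob hlap

  intro ε hε
  set c : ℝ := ((d:ℝ) + 1)/2 with hc
  have hc1 : (1:ℝ) ≤ c := by
    rw [hc]
    have : (1:ℝ) ≤ (d:ℝ) := by exact_mod_cast hd
    linarith
  have hc0 : (0:ℝ) < c := lt_of_lt_of_le one_pos hc1
  have hΓβ : 0 < Real.Gamma β := Real.Gamma_pos_of_pos hβ0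
  have hΓc : 0 < Real.Gamma c := Real.Gamma_pos_of_pos hc0
  set C0 : ℝ := Real.pi ^ (-c) * Real.Gamma c with hC0def
  have hC0 : 0 < C0 := mul_pos (Real.rpow_pos_of_pos Real.pi_pos _) hΓc
  set M : ℝ := 1 / (β * Real.Gamma β) with hMdef
  have hM : 0 < M := by positivity
  set G : ℝ → ℝ := fun a => ∫ s in Ioi (0:ℝ),
    s ^ (-β) / ((a ^ β * s ^ (-β)) ^ 2 + 1) ^ c ∂μ with hGdef
  -- dominated convergence
  have hG : Tendsto G (nhdsWithin (0:ℝ) (Ioi 0)) (nhds M) := by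
    rw [← hmomval]
    apply tendsto_integral_filter_of_dominated_convergence (fun s : ℝ => s ^ (-β))
    · exact Eventually.of_forall fun a =>
        Measurable.aestronglyMeasurable (by fun_prop)
    · refine Eventually.of_forall fun a => ?_
      filter_upwards [ae_restrict_mem measurableSet_Ioi] with s hs
      have hs0 : (0:ℝ) < s := hs
      have hsb : (0:ℝ) < s ^ (-β) := Real.rpow_pos_of_pos hs0 _
      have hden : (1:ℝ) ≤ ((a ^ β * s ^ (-β)) ^ 2 + 1) ^ c :=
        Real.one_le_rpow (by nlinarith [sq_nonneg (a ^ β * s ^ (-β))]) hc0.le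
      rw [Real.norm_eq_abs, abs_of_nonneg (div_nonneg hsb.le (by positivity))]
      exact div_le_self hsb.le hden
    · exact hmom
    · filter_upwards [ae_restrict_mem measurableSet_Ioi] with s hs
      have hs0 : (0:ℝ) < s := hs
      have ha : Tendsto (fun a : ℝ => a ^ β) (nhdsWithin (0:ℝ) (Ioi 0)) (nhds 0) := by
        have h := (Real.continuousAt_rpow_const 0 β (Or.inr hβ0.le)).tendsto
        rw [Real.zero_rpow hβ0.ne'] at h
        exact h.mono_left nhdsWithin_le_nhds
      have h2 : Tendsto (fun a : ℝ => (a ^ β * s ^ (-β)) ^ 2 + 1)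
          (nhdsWithin (0:ℝ) (Ioi 0)) (nhds 1) := by
        have := ((ha.mul_const (s ^ (-β))).pow 2).add_const (1:ℝ)
        simpa using this
      have h3 : Tendsto (fun a : ℝ => ((a ^ β * s ^ (-β)) ^ 2 + 1) ^ c)
          (nhdsWithin (0:ℝ) (Ioi 0)) (nhds 1) := by
        have := (Real.continuousAt_rpow_const 1 c (Or.inl one_ne_zero)).tendsto.comp h2
        simpa [Real.one_rpow, Function.comp_def] using this
      have := Tendsto.div (tendsto_const_nhds (x := s ^ (-β))
        (f := nhdsWithin (0:ℝ) (Ioi 0))) h3 one_ne_zero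
      rw [div_one] at this
      exact this
  rw [Metric.tendsto_nhdsWithin_nhds] at hG
  obtain ⟨δ', hδ'pos, hδ'⟩ := hG (ε * M) (by positivity)
  refine ⟨δ' / 2, by positivity, ?_⟩
  intro t ht x y hxy hle
  set R : ℝ := dist x y with hRdef
  have hR0 : 0 < R := dist_pos.mpr hxy
  set a : ℝ := R ^ (-(1/β)) * t with hadef
  have ha0 : 0 < a := mul_pos (Real.rpow_pos_of_pos hR0 _) ht
  have hGa : |G a - M| ≤ ε * M := by
    have h := hδ' (mem_Ioi.mpr ha0)
      (by rw [Real.dist_eq, sub_zero, abs_of_pos ha0]; linarith)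
    rw [Real.dist_eq] at h
    exact h.le
  have htβ : 0 < t ^ β := Real.rpow_pos_of_pos ht _
  have haβ : a ^ β = t ^ β / R := by
    rw [hadef, Real.mul_rpow (Real.rpow_nonneg hR0.le _) ht.le,
      ← Real.rpow_mul hR0.le]
    rw [show -(1/β) * β = -1 by field_simp, Real.rpow_neg_one]
    ring
  -- rewrite pSinv
  have hkey : pSinv t x y = (C0 * t ^ β * R ^ (-((d:ℝ) + 1))) * G a := by
    rw [hpSinv t ht x y, hGdef, ← integral_const_mul]
    refine setIntegral_congr_fun measurableSet_Ioi (fun s hs => ?_)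
    have hs0 : (0:ℝ) < s := hs
    have hsb : (0:ℝ) < s ^ (-β) := Real.rpow_pos_of_pos hs0 _
    have e1 : a ^ β * s ^ (-β) = t ^ β * s ^ (-β) / R := by rw [haβ]; ring
    have hXpos : (0:ℝ) < (t ^ β * s ^ (-β) / R) ^ 2 + 1 := by positivity
    have e2 : ((t ^ β * s ^ (-β)) ^ 2 + R ^ 2) ^ c
        = R ^ ((d:ℝ) + 1) * ((t ^ β * s ^ (-β) / R) ^ 2 + 1) ^ c := by
      have h21 : (t ^ β * s ^ (-β)) ^ 2 + R ^ 2
          = R ^ 2 * ((t ^ β * s ^ (-β) / R) ^ 2 + 1) := by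
        field_simp
      rw [h21, Real.mul_rpow (by positivity) hXpos.le]
      congr 1
      rw [← Real.rpow_natCast R 2, ← Real.rpow_mul hR0.le]
      norm_num
      rw [hc]
      congr 1
      ring
    rw [e1, e2]
    have hXc : (0:ℝ) < ((t ^ β * s ^ (-β) / R) ^ 2 + 1) ^ c :=
      Real.rpow_pos_of_pos hXpos _
    have hRd : (0:ℝ) < R ^ ((d:ℝ) + 1) := Real.rpow_pos_of_pos hR0 _
    rw [Real.rpow_neg hR0.le]
    field_simp
  -- constant identity
  have hK : Real.Gamma c / (Real.pi ^ c * β * Real.Gamma β) = C0 * M := by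
    rw [hC0def, hMdef, Real.rpow_neg Real.pi_pos.le]
    have : (0:ℝ) < Real.pi ^ c := Real.rpow_pos_of_pos Real.pi_pos _
    field_simp
  rw [hK]
  have hfactor : (0:ℝ) < C0 * t ^ β * R ^ (-((d:ℝ) + 1)) :=
    mul_pos (mul_pos hC0 htβ) (Real.rpow_pos_of_pos hR0 _)
  have hratio : pSinv t x y / (C0 * M * (R ^ (-((d:ℝ) + 1)) * t ^ β)) = G a / M := by
    rw [hkey]
    rw [show C0 * M * (R ^ (-((d:ℝ) + 1)) * t ^ β)
        = (C0 * t ^ β * R ^ (-((d:ℝ) + 1))) * M by ring]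
    rw [mul_div_mul_left _ _ hfactor.ne']
  rw [hratio, div_sub_one hM.ne', abs_div, abs_of_pos hM, div_le_iff₀ hM]
  calc |G a - M| ≤ ε * M := hGa
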